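/- arXiv:1103.2487 — 2 statements merged into one kernel-verified Lean document; each statement's English description precedes it below -/
import Mathlib

section
/- Let H be the conjunctive hierarchical game on P = P_1∪...∪P_m (disjoint nonempty levels, |P_i| = n_i) with thresholds k_1<...<k_{m-1}≤k_m. Then the equivalence classes of ~_H are exactly P_1,...,P_m if and only if (a) k_1 ≤ n_1 and (b) k_i < k_{i-1} + n_i for every i with 1 < i ≤ m. Moreover, under (a) and (b), every player of the last level P_m is a dummy if and only if k_{m-1} = k_m. -/
set_option linter.unusedSectionVars false

/-- Cumulative union `P_1 ∪ ... ∪ P_i` of the first `i` (1-indexed) levels. -/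
def cumUnion {α : Type*} [DecidableEq α] (P : ℕ → Finset α) (i : ℕ) : Finset α :=
  (Finset.Icc 1 i).biUnion P

/-- Winning predicate of the conjunctive hierarchical game. -/
def conjWin {α : Type*} [DecidableEq α] (m : ℕ) (P : ℕ → Finset α) (k : ℕ → ℕ)
    (X : Finset α) : Prop :=
  ∀ i, 1 ≤ i → i ≤ m → k i ≤ (X ∩ cumUnion P i).card

/-- A minimal winning coalition of the conjunctive hierarchical game. -/
def minWinning {α : Type*} [DecidableEq α] (m : ℕ) (P : ℕ → Finset α) (k : ℕ → ℕ)
    (X : Finset α) : Prop :=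
  conjWin m P k X ∧ ∀ Y : Finset α, Y ⊂ X → ¬ conjWin m P k Y

/-- A dummy player: one that belongs to no minimal winning coalition. -/
def isDummy {α : Type*} [DecidableEq α] (m : ℕ) (P : ℕ → Finset α) (k : ℕ → ℕ)
    (p : α) : Prop :=
  ∀ X : Finset α, minWinning m P k X → p ∉ X

open Finset

section Helpers
variable {α : Type*} [DecidableEq α] {m : ℕ} {P : ℕ → Finset α} {k : ℕ → ℕ}

lemma mem_cumUnion {j : ℕ} {a : α} :
    a ∈ cumUnion P j ↔ ∃ s, 1 ≤ s ∧ s ≤ j ∧ a ∈ P s := by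
  simp [cumUnion, Finset.mem_biUnion, Finset.mem_Icc, and_assoc]

lemma level_unique (hdisj : ∀ i j, 1 ≤ i → i < j → j ≤ m → Disjoint (P i) (P j))
    {a : α} {i j : ℕ} (hi : 1 ≤ i) (him : i ≤ m) (hj : 1 ≤ j) (hjm : j ≤ m)
    (hai : a ∈ P i) (haj : a ∈ P j) : i = j := by
  rcases lt_trichotomy i j with h | h | h
  · exact absurd haj (Finset.disjoint_left.mp (hdisj i j hi h hjm) hai)
  · exact h
  · exact absurd hai (Finset.disjoint_left.mp (hdisj j i hj h him) haj)

lemma mem_cumUnion_iff (hdisj : ∀ i j, 1 ≤ i → i < j → j ≤ m → Disjoint (P i) (P j))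
    {a : α} {i j : ℕ} (hi : 1 ≤ i) (him : i ≤ m) (hjm : j ≤ m) (hai : a ∈ P i) :
    a ∈ cumUnion P j ↔ i ≤ j := by
  rw [mem_cumUnion]
  constructor
  · rintro ⟨s, hs1, hsj, has⟩
    have := level_unique hdisj hi him hs1 (hsj.trans hjm) hai has
    omega
  · intro h; exact ⟨i, hi, h, hai⟩

lemma card_insert_inter (X C : Finset α) (a : α) (ha : a ∉ X) :
    ((insert a X) ∩ C).card = (X ∩ C).card + (if a ∈ C then 1 else 0) := by
  split_ifs with h
  · rw [Finset.insert_inter_of_mem h, Finset.card_insert_of_notMem (by simp [ha])]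
  · rw [Finset.insert_inter_of_notMem h, Nat.add_zero]

/-- constraint `i-1` is redundant when `k (i-1) + |P i| ≤ k i`. -/
lemma conjWin_of_skip {i : ℕ} (hi : 2 ≤ i) (him : i ≤ m)
    (hred : k (i-1) + (P i).card ≤ k i) (Y : Finset α)
    (h : ∀ j, 1 ≤ j → j ≤ m → j ≠ i - 1 → k j ≤ (Y ∩ cumUnion P j).card) :
    conjWin m P k Y := by
  intro j hj1 hjm
  by_cases hji : j = i - 1
  · subst hji
    have hi' := h i (by omega) him (by omega)
    have hsub : Y ∩ cumUnion P i ⊆ (Y ∩ cumUnion P (i-1)) ∪ P i := by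
      intro x hx
      rw [Finset.mem_inter, mem_cumUnion] at hx
      obtain ⟨hxY, s, hs1, hsi, hxs⟩ := hx
      rcases eq_or_lt_of_le hsi with rfl | hlt
      · exact Finset.mem_union_right _ hxs
      · exact Finset.mem_union_left _
          (Finset.mem_inter.mpr ⟨hxY, mem_cumUnion.mpr ⟨s, hs1, by omega, hxs⟩⟩)
    have h1 := Finset.card_le_card hsub
    have h2 := Finset.card_union_le (Y ∩ cumUnion P (i-1)) (P i)
    omega
  · exact h j hj1 hjm hji

/-- Construction of a "tight" coalition with prescribed level counts. -/
lemma exists_tight (hdisj : ∀ i j, 1 ≤ i → i < j → j ≤ m → Disjoint (P i) (P j))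
    (a : ℕ → ℕ) (Q R : ℕ → Finset α)
    (hQ : ∀ t, 1 ≤ t → t ≤ m → Q t ⊆ P t)
    (hRQ : ∀ t, 1 ≤ t → t ≤ m → R t ⊆ Q t)
    (hRa : ∀ t, 1 ≤ t → t ≤ m → (R t).card ≤ a t)
    (ha : ∀ t, 1 ≤ t → t ≤ m → a t ≤ (Q t).card) :
    ∃ S : ℕ → Finset α,
      (∀ t, 1 ≤ t → t ≤ m → R t ⊆ S t ∧ S t ⊆ Q t ∧ (S t).card = a t) ∧
      ∀ j, 1 ≤ j → j ≤ m →
        (((Icc 1 m).biUnion S) ∩ cumUnion P j).card = ∑ t ∈ Icc 1 j, a t := by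
  have hex : ∀ t, ∃ s : Finset α, (1 ≤ t → t ≤ m → R t ⊆ s ∧ s ⊆ Q t ∧ s.card = a t) := by
    intro t
    by_cases h : 1 ≤ t ∧ t ≤ m
    · obtain ⟨s, h1, h2, h3⟩ := Finset.exists_subsuperset_card_eq (hRQ t h.1 h.2)
        (hRa t h.1 h.2) (ha t h.1 h.2)
      exact ⟨s, fun _ _ => ⟨h1, h2, h3⟩⟩
    · exact ⟨∅, fun h1 h2 => absurd ⟨h1, h2⟩ h⟩
  choose S hS using hex
  have hSP : ∀ t, 1 ≤ t → t ≤ m → S t ⊆ P t := fun t h1 h2 =>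
    ((hS t h1 h2).2.1).trans (hQ t h1 h2)
  refine ⟨S, hS, ?_⟩
  intro j hj1 hjm
  have hset : ((Icc 1 m).biUnion S) ∩ cumUnion P j = (Icc 1 j).biUnion S := by
    ext x
    simp only [Finset.mem_inter, Finset.mem_biUnion, Finset.mem_Icc, mem_cumUnion]
    constructor
    · rintro ⟨⟨t, ⟨ht1, htm⟩, hxt⟩, s, hs1, hsj, hxs⟩
      have : t = s := level_unique hdisj ht1 htm hs1 (hsj.trans hjm) (hSP t ht1 htm hxt) hxs
      exact ⟨t, ⟨ht1, by omega⟩, hxt⟩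
    · rintro ⟨t, ⟨ht1, htj⟩, hxt⟩
      exact ⟨⟨t, ⟨ht1, htj.trans hjm⟩, hxt⟩, t, ht1, htj, hSP t ht1 (htj.trans hjm) hxt⟩
  rw [hset, Finset.card_biUnion]
  · exact Finset.sum_congr rfl fun t ht => by
      rw [Finset.mem_Icc] at ht
      exact (hS t ht.1 (ht.2.trans hjm)).2.2
  · intro x hx y hy hxy
    rw [Finset.mem_coe, Finset.mem_Icc] at hx hy
    rcases lt_or_gt_of_ne hxy with h | h
    · exact (hdisj x y hx.1 h (hy.2.trans hjm)).mono (hSP x hx.1 (hx.2.trans hjm))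
        (hSP y hy.1 (hy.2.trans hjm))
    · exact ((hdisj y x hy.1 h (hx.2.trans hjm)).mono (hSP y hy.1 (hy.2.trans hjm))
        (hSP x hx.1 (hx.2.trans hjm))).symm

lemma sum_telescope (kk : ℕ → ℕ) (h0 : kk 0 = 0)
    (hmono : ∀ t, t < m → kk t ≤ kk (t+1)) :
    ∀ j, j ≤ m → ∑ t ∈ Icc 1 j, (kk t - kk (t-1)) = kk j := by
  intro j
  induction j with
  | zero => intro _; simp [h0]
  | succ n ih =>
    intro hn
    rw [Finset.sum_Icc_succ_top (by omega : 1 ≤ n + 1), ih (by omega)]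
    have := hmono n (by omega)
    simp only [Nat.add_sub_cancel]
    omega

lemma equiv_of_same_level (hdisj : ∀ i j, 1 ≤ i → i < j → j ≤ m → Disjoint (P i) (P j))
    {i : ℕ} (hi1 : 1 ≤ i) (him : i ≤ m) {u v : α}
    (hu : u ∈ P i) (hv : v ∈ P i) (X : Finset α) (hux : u ∉ X) (hvx : v ∉ X) :
    conjWin m P k (insert u X) ↔ conjWin m P k (insert v X) := by
  have key : ∀ j, j ≤ m →
      ((insert u X) ∩ cumUnion P j).card = ((insert v X) ∩ cumUnion P j).card := by
    intro j hjm
    rw [card_insert_inter _ _ _ hux, card_insert_inter _ _ _ hvx]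
    have huv : (u ∈ cumUnion P j) ↔ (v ∈ cumUnion P j) := by
      rw [mem_cumUnion_iff hdisj hi1 him hjm hu, mem_cumUnion_iff hdisj hi1 him hjm hv]
    congr 1
    exact if_congr huv rfl rfl
  constructor
  · intro h j h1 h2; rw [← key j h2]; exact h j h1 h2
  · intro h j h1 h2; rw [key j h2]; exact h j h1 h2

end Helpers

/-- for the conjunctive hierarchical game `H` on
`P = P_1 ∪ ... ∪ P_m` with thresholds `k_1 < ... < k_{m-1} ≤ k_m`, the
equivalence classes of `~_H` are exactly `P_1, ..., P_m` iff (a) `k_1 ≤ n_1`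
and (b) `k_i < k_{i-1} + n_i` for every `1 < i ≤ m`. Moreover, under (a) and
(b), every player of the last level `P_m` is a dummy iff `k_{m-1} = k_m`. -/
theorem stmt_11 {α : Type*} [Fintype α] [DecidableEq α]
    (m : ℕ) (hm : 2 ≤ m) (P : ℕ → Finset α) (k : ℕ → ℕ)
    (hdisj : ∀ i j, 1 ≤ i → i < j → j ≤ m → Disjoint (P i) (P j))
    (hlvlne : ∀ i, 1 ≤ i → i ≤ m → (P i).Nonempty)
    (hcover : ∀ a : α, ∃ i, 1 ≤ i ∧ i ≤ m ∧ a ∈ P i)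
    (hkpos : ∀ i, 1 ≤ i → i ≤ m → 0 < k i)
    (hkmono : ∀ i, 1 ≤ i → i + 1 < m → k i < k (i + 1))
    (hklast : k (m - 1) ≤ k m) :
    ((∀ u v : α,
        (∀ X : Finset α, u ∉ X → v ∉ X →
            (conjWin m P k (insert u X) ↔ conjWin m P k (insert v X))) ↔
          ∃ i, 1 ≤ i ∧ i ≤ m ∧ u ∈ P i ∧ v ∈ P i) ↔
      (k 1 ≤ (P 1).card ∧
        ∀ i, 1 < i → i ≤ m → k i < k (i - 1) + (P i).card)) ∧
    ((k 1 ≤ (P 1).card ∧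
        ∀ i, 1 < i → i ≤ m → k i < k (i - 1) + (P i).card) →
      ((∀ p ∈ P m, isDummy m P k p) ↔ k (m - 1) = k m)) := by
  classical
  set kk : ℕ → ℕ := fun t => if t = 0 then 0 else k t with hkk
  have hkk0 : kk 0 = 0 := by simp [hkk]
  have hkkpos : ∀ t, 1 ≤ t → t ≤ m → kk t = k t := by
    intro t h1 _; simp [hkk]; omega
  have hkkmono : ∀ t, t < m → kk t ≤ kk (t+1) := by
    intro t ht
    rcases Nat.eq_zero_or_pos t with rfl | h1
    · simp [hkk]
    · rw [hkkpos t h1 (by omega), hkkpos (t+1) (by omega) (by omega)]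
      rcases eq_or_lt_of_le (Nat.succ_le_of_lt ht) with heq | hlt
      · have : t = m - 1 := by omega
        subst this
        have : m - 1 + 1 = m := by omega
        rw [this]
        exact hklast
      · exact le_of_lt (hkmono t h1 hlt)
  set a : ℕ → ℕ := fun t => kk t - kk (t-1) with haa
  have hsum : ∀ j, j ≤ m → ∑ t ∈ Icc 1 j, a t = kk j :=
    sum_telescope kk hkk0 hkkmono
  have ha_pos : ∀ t, 1 ≤ t → t < m → 1 ≤ a t := by
    intro t h1 htm
    rcases eq_or_lt_of_le h1 with rfl | h2
    · have := hkpos 1 le_rfl (by omega)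
      simp [haa, hkk]; omega
    · have := hkmono (t-1) (by omega) (by omega)
      have e1 : kk t = k t := hkkpos t h1 (by omega)
      have e2 : kk (t-1) = k (t-1) := hkkpos (t-1) (by omega) (by omega)
      have e3 : t - 1 + 1 = t := by omega
      rw [e3] at this
      simp only [haa]; omega
  -- the separating construction under (a) and (b)
  have sep : ∀ (ha : k 1 ≤ (P 1).card)
      (hb : ∀ i, 1 < i → i ≤ m → k i < k (i - 1) + (P i).card)
      (u v : α) (i j : ℕ), 1 ≤ i → i < j → j ≤ m → u ∈ P i → v ∈ P j →
      (∀ X : Finset α, u ∉ X → v ∉ X →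
        (conjWin m P k (insert u X) ↔ conjWin m P k (insert v X))) → False := by
    intro hA hB u v i j hi1 hij hjm hu hv hequiv
    have him : i ≤ m := by omega
    have ha_card : ∀ t, 1 ≤ t → t ≤ m → a t ≤ (P t).card := by
      intro t h1 h2
      rcases eq_or_lt_of_le h1 with rfl | h3
      · simpa [haa, hkk] using hA
      · have := hB t h3 h2
        have e1 : kk t = k t := hkkpos t h1 h2
        have e2 : kk (t-1) = k (t-1) := hkkpos (t-1) (by omega) (by omega)
        simp only [haa]; omega
    obtain ⟨S, hS, hScum⟩ := exists_tight hdisj a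
      (fun t => if t = j then (P j).erase v else P t)
      (fun t => if t = i then {u} else ∅)
      (by intro t h1 h2; split_ifs with h
          · subst h; exact Finset.erase_subset _ _
          · exact Finset.Subset.refl _)
      (by intro t h1 h2; split_ifs with h h'
          · omega
          · subst h; intro x hx; rw [Finset.mem_singleton] at hx; subst hx; exact hu
          · exact Finset.empty_subset _
          · exact Finset.empty_subset _)
      (by intro t h1 h2; split_ifs with h
          · subst h; simpa using ha_pos t h1 (by omega)
          · simp)
      (by intro t h1 h2; split_ifs with h
          · subst h
            rw [Finset.card_erase_of_mem hv]
            have := hB t (by omega) h2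
            have e1 : kk t = k t := hkkpos t h1 h2
            have e2 : kk (t-1) = k (t-1) := hkkpos (t-1) (by omega) (by omega)
            have hc : 0 < (P t).card := Finset.card_pos.mpr (hlvlne t h1 h2)
            simp only [haa]; omega
          · exact ha_card t h1 h2)
    set SS : Finset α := (Icc 1 m).biUnion S with hSS
    have huSS : u ∈ SS := by
      rw [hSS, Finset.mem_biUnion]
      refine ⟨i, Finset.mem_Icc.mpr ⟨hi1, him⟩, (hS i hi1 him).1 ?_⟩
      simp
    have hvSS : v ∉ SS := by
      rw [hSS, Finset.mem_biUnion]
      rintro ⟨t, ht, hvt⟩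
      rw [Finset.mem_Icc] at ht
      have hvQ := (hS t ht.1 ht.2).2.1 hvt
      by_cases h : t = j
      · subst h; simp at hvQ
      · rw [if_neg h] at hvQ
        exact h (level_unique hdisj ht.1 ht.2 (by omega) hjm hvQ hv)
    set X : Finset α := SS.erase u with hX
    have hux : u ∉ X := Finset.notMem_erase _ _
    have hvx : v ∉ X := fun h => hvSS (Finset.mem_of_mem_erase h)
    have hins : insert u X = SS := Finset.insert_erase huSS
    have hSSwin : conjWin m P k SS := by
      intro t h1 h2
      rw [hScum t h1 h2, hsum t h2, hkkpos t h1 h2]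
    have hvlose : ¬ conjWin m P k (insert v X) := by
      intro hwin
      have hvCi : v ∉ cumUnion P i := by
        rw [mem_cumUnion_iff hdisj (by omega) hjm him hv]
        omega
      have huCi : u ∈ cumUnion P i := mem_cumUnion.mpr ⟨i, hi1, le_rfl, hu⟩
      have h1 := hwin i hi1 him
      rw [Finset.insert_inter_of_notMem hvCi, hX, Finset.erase_inter,
        Finset.card_erase_of_mem (Finset.mem_inter.mpr ⟨huSS, huCi⟩),
        hScum i hi1 him, hsum i him, hkkpos i hi1 him] at h1
      have := hkpos i hi1 him
      omega
    exact hvlose ((hequiv X hux hvx).mp (by rw [hins]; exact hSSwin))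
  constructor
  · constructor
    · -- classes = levels → (a) ∧ (b)
      intro hclass
      constructor
      · by_contra hA
        push_neg at hA
        obtain ⟨u, hu⟩ := hlvlne 1 le_rfl (by omega)
        obtain ⟨v, hv⟩ := hlvlne 2 (by omega) hm
        have hnowin : ∀ Y : Finset α, ¬ conjWin m P k Y := by
          intro Y hY
          have h1 := hY 1 le_rfl (by omega)
          have h2 : Y ∩ cumUnion P 1 ⊆ P 1 := by
            intro x hx
            rw [Finset.mem_inter, mem_cumUnion] at hx
            obtain ⟨_, s, hs1, hs2, hxs⟩ := hx
            have : s = 1 := by omega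
            subst this; exact hxs
          have := Finset.card_le_card h2
          omega
        obtain ⟨l, hl1, hlm, hul, hvl⟩ := (hclass u v).mp
          (fun X _ _ => iff_of_false (hnowin _) (hnowin _))
        have : l = 1 := level_unique hdisj hl1 hlm le_rfl (by omega) hul hu
        subst this
        exact Finset.disjoint_left.mp (hdisj 1 2 le_rfl (by omega) hm) hvl hv
      · intro i hi1 him
        by_contra hB
        push_neg at hB
        obtain ⟨u, hu⟩ := hlvlne (i-1) (by omega) (by omega)
        obtain ⟨v, hv⟩ := hlvlne i (by omega) him
        have hequiv : ∀ X : Finset α, u ∉ X → v ∉ X →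
            (conjWin m P k (insert u X) ↔ conjWin m P k (insert v X)) := by
          intro X hux hvx
          have key : ∀ j, 1 ≤ j → j ≤ m → j ≠ i - 1 →
              ((insert u X) ∩ cumUnion P j).card = ((insert v X) ∩ cumUnion P j).card := by
            intro j hj1 hjm hji
            rw [card_insert_inter _ _ _ hux, card_insert_inter _ _ _ hvx]
            have huv : (u ∈ cumUnion P j) ↔ (v ∈ cumUnion P j) := by
              rw [mem_cumUnion_iff hdisj (by omega) (by omega) hjm hu,
                mem_cumUnion_iff hdisj (by omega) him hjm hv]
              omega
            congr 1
            exact if_congr huv rfl rfl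
          constructor
          · intro h
            exact conjWin_of_skip (by omega) him hB _
              (fun j hj1 hjm hji => by rw [← key j hj1 hjm hji]; exact h j hj1 hjm)
          · intro h
            exact conjWin_of_skip (by omega) him hB _
              (fun j hj1 hjm hji => by rw [key j hj1 hjm hji]; exact h j hj1 hjm)
        obtain ⟨l, hl1, hlm, hul, hvl⟩ := (hclass u v).mp hequiv
        have : l = i - 1 := level_unique hdisj hl1 hlm (by omega) (by omega) hul hu
        subst this
        exact Finset.disjoint_left.mp (hdisj (i-1) i (by omega) (by omega) him) hvl hv
    · -- (a) ∧ (b) → classes = levels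
      rintro ⟨hA, hB⟩ u v
      constructor
      · intro hequiv
        obtain ⟨i, hi1, him, hui⟩ := hcover u
        obtain ⟨j, hj1, hjm, hvj⟩ := hcover v
        rcases lt_trichotomy i j with h | h | h
        · exact absurd (sep hA hB u v i j hi1 h hjm hui hvj hequiv) (not_false)
        · subst h; exact ⟨i, hi1, him, hui, hvj⟩
        · exact absurd (sep hA hB v u j i hj1 h him hvj hui
            (fun X hvx hux => (hequiv X hux hvx).symm)) (not_false)
      · rintro ⟨i, hi1, him, hui, hvi⟩ X hux hvx
        exact equiv_of_same_level hdisj hi1 him hui hvi X hux hvx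
  · -- dummy part
    rintro ⟨hA, hB⟩
    constructor
    · intro hdum
      by_contra hne
      have hlt : k (m-1) < k m := lt_of_le_of_ne hklast hne
      obtain ⟨p, hp⟩ := hlvlne m (by omega) le_rfl
      have ha_card : ∀ t, 1 ≤ t → t ≤ m → a t ≤ (P t).card := by
        intro t h1 h2
        rcases eq_or_lt_of_le h1 with rfl | h3
        · simpa [haa, hkk] using hA
        · have := hB t h3 h2
          have e1 : kk t = k t := hkkpos t h1 h2
          have e2 : kk (t-1) = k (t-1) := hkkpos (t-1) (by omega) (by omega)
          simp only [haa]; omega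
      obtain ⟨S, hS, hScum⟩ := exists_tight hdisj a P
        (fun t => if t = m then {p} else ∅)
        (fun t _ _ => Finset.Subset.refl _)
        (by intro t h1 h2; split_ifs with h
            · subst h; intro x hx; rw [Finset.mem_singleton] at hx; subst hx; exact hp
            · exact Finset.empty_subset _)
        (by intro t h1 h2; split_ifs with h
            · subst h
              have e1 : kk t = k t := hkkpos t h1 h2
              have e2 : kk (t-1) = k (t-1) := hkkpos (t-1) (by omega) (by omega)
              simp only [haa, Finset.card_singleton]; omega
            · simp)
        ha_card
      set SS : Finset α := (Icc 1 m).biUnion S with hSS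
      have hpSS : p ∈ SS := by
        rw [hSS, Finset.mem_biUnion]
        refine ⟨m, Finset.mem_Icc.mpr ⟨by omega, le_rfl⟩, (hS m (by omega) le_rfl).1 ?_⟩
        simp
      have hSSwin : conjWin m P k SS := by
        intro t h1 h2
        rw [hScum t h1 h2, hsum t h2, hkkpos t h1 h2]
      have hmin : minWinning m P k SS := by
        refine ⟨hSSwin, ?_⟩
        intro Y hY hYwin
        obtain ⟨q, hqSS, hqY⟩ := Finset.exists_of_ssubset hY
        have hq : ∃ t, 1 ≤ t ∧ t ≤ m ∧ q ∈ S t := by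
          rw [hSS, Finset.mem_biUnion] at hqSS
          obtain ⟨t, ht, hqt⟩ := hqSS
          rw [Finset.mem_Icc] at ht
          exact ⟨t, ht.1, ht.2, hqt⟩
        obtain ⟨t, ht1, htm, hqt⟩ := hq
        have hqP : q ∈ P t := (hS t ht1 htm).2.1 hqt
        have hqC : q ∈ cumUnion P t := mem_cumUnion.mpr ⟨t, ht1, le_rfl, hqP⟩
        have hsub : Y ∩ cumUnion P t ⊆ (SS ∩ cumUnion P t).erase q := by
          intro x hx
          rw [Finset.mem_inter] at hx
          rw [Finset.mem_erase, Finset.mem_inter]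
          exact ⟨fun h => hqY (h ▸ hx.1), hY.subset hx.1, hx.2⟩
        have hcard := Finset.card_le_card hsub
        rw [Finset.card_erase_of_mem (Finset.mem_inter.mpr ⟨hqSS, hqC⟩),
          hScum t ht1 htm, hsum t htm, hkkpos t ht1 htm] at hcard
        have := hYwin t ht1 htm
        have := hkpos t ht1 htm
        omega
      exact hdum p hp SS hmin hpSS
    · intro hk p hp X hminX hpX
      have hpC : ∀ j, j ≤ m → (p ∈ cumUnion P j ↔ m ≤ j) :=
        fun j hjm => mem_cumUnion_iff hdisj (by omega) le_rfl hjm hp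
      set Y : Finset α := X.erase p with hY
      have hYwin : conjWin m P k Y := by
        intro t h1 h2
        rcases eq_or_lt_of_le h2 with rfl | h3
        · -- t = m : use the (m-1) constraint and k (m-1) = k m
          have hm1 := hminX.1 (t-1) (by omega) (by omega)
          have hpC1 : p ∉ cumUnion P (t-1) := by
            rw [hpC (t-1) (by omega)]; omega
          have heq : Y ∩ cumUnion P (t-1) = X ∩ cumUnion P (t-1) := by
            rw [hY, Finset.erase_inter, Finset.erase_eq_of_notMem]
            intro h; exact hpC1 (Finset.mem_inter.mp h).2
          have hsub : Y ∩ cumUnion P (t-1) ⊆ Y ∩ cumUnion P t := by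
            apply Finset.inter_subset_inter_left
            intro x hx
            rw [mem_cumUnion] at hx ⊢
            obtain ⟨s, hs1, hs2, hxs⟩ := hx
            exact ⟨s, hs1, by omega, hxs⟩
          have := Finset.card_le_card hsub
          rw [heq] at this
          omega
        · have hpCt : p ∉ cumUnion P t := by
            rw [hpC t (by omega)]; omega
          have heq : Y ∩ cumUnion P t = X ∩ cumUnion P t := by
            rw [hY, Finset.erase_inter, Finset.erase_eq_of_notMem]
            intro h; exact hpCt (Finset.mem_inter.mp h).2
          rw [heq]
          exact hminX.1 t h1 (by omega)
      exact hminX.2 Y (Finset.erase_ssubset hpX) hYwin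
end

section
/- Duality exchanges unique shift-maximal losing coalitions and unique shift-minimal winning coalitions: let G=(P,W) be a complete simple game with a unique shift-maximal losing coalition S. Then the complement P∖S is the unique shift-minimal winning coalition of the dual game G*. -/
/-- Isbel's desirability relation `i ≽_G j` for the game with winning
coalitions `W` (the player set is the whole finite type): for every coalition
`X` avoiding `i` and `j`, `X ∪ {j} ∈ W` implies `X ∪ {i} ∈ W`. -/
def isbelGE {α : Type*} [DecidableEq α] (W : Set (Finset α)) (i j : α) : Prop :=
  ∀ X : Finset α, i ∉ X → j ∉ X → (insert j X ∈ W → insert i X ∈ W)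

/-- `q ≺_G p`: `p ≽_G q` but not `q ≽_G p`. -/
def strictPrec {α : Type*} [DecidableEq α] (W : Set (Finset α)) (q p : α) : Prop :=
  isbelGE W p q ∧ ¬ isbelGE W q p

/-- A shift-minimal winning coalition: winning, every coalition properly
contained in it is losing, and every coalition obtained from it by a shift
(replacing `p ∈ X` by `q ∉ X` with `q ≺ p`) is losing. -/
def shiftMinWinning {α : Type*} [DecidableEq α] (W : Set (Finset α))
    (X : Finset α) : Prop :=
  X ∈ W ∧ (∀ Y : Finset α, Y ⊂ X → Y ∉ W) ∧
    ∀ p q : α, p ∈ X → q ∉ X → strictPrec W q p → insert q (X.erase p) ∉ W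

/-- A shift-maximal losing coalition: losing, every coalition properly
containing it is winning, and it is not obtained from any losing coalition by
a shift. -/
def shiftMaxLosing {α : Type*} [DecidableEq α] (W : Set (Finset α))
    (Y : Finset α) : Prop :=
  Y ∉ W ∧ (∀ Z : Finset α, Y ⊂ Z → Z ∈ W) ∧
    ¬ ∃ (Z : Finset α) (p q : α), Z ∉ W ∧ p ∈ Z ∧ q ∉ Z ∧ strictPrec W q p ∧
        Y = insert q (Z.erase p)

/-- The dual game `G*`: a coalition is winning iff its complement is losing. -/
def dualW {α : Type*} [Fintype α] [DecidableEq α] (W : Set (Finset α)) :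
    Set (Finset α) := {X | Xᶜ ∉ W}

lemma dual_dual {α : Type*} [Fintype α] [DecidableEq α] (W : Set (Finset α)) :
    dualW (dualW W) = W := by
  ext X; simp [dualW]

lemma isbel_dual_of {α : Type*} [Fintype α] [DecidableEq α] (W : Set (Finset α))
    {i j : α} (h : isbelGE W i j) : isbelGE (dualW W) i j := by
  rcases eq_or_ne i j with rfl | hij
  · intro X _ _ hw; exact hw
  intro X hiX hjX hw
  have hiY : i ∉ (Xᶜ.erase i).erase j := by simp [Finset.mem_erase]
  have hjY : j ∉ (Xᶜ.erase i).erase j := by simp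
  have e1 : (insert j X)ᶜ = insert i ((Xᶜ.erase i).erase j) := by
    ext x
    rcases eq_or_ne x i with rfl | hxi <;> rcases eq_or_ne x j with rfl | hxj <;>
      simp_all [Finset.mem_erase]
  have e2 : (insert i X)ᶜ = insert j ((Xᶜ.erase i).erase j) := by
    ext x
    rcases eq_or_ne x i with rfl | hxi <;> rcases eq_or_ne x j with rfl | hxj <;>
      simp_all [Finset.mem_erase]
  simp only [dualW, Set.mem_setOf_eq] at hw ⊢
  rw [e1] at hw
  rw [e2]
  intro hjW
  exact hw (h _ hiY hjY hjW)

lemma isbel_dual {α : Type*} [Fintype α] [DecidableEq α] (W : Set (Finset α))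
    (i j : α) : isbelGE (dualW W) i j ↔ isbelGE W i j := by
  constructor
  · intro h
    have := isbel_dual_of (dualW W) h
    rwa [dual_dual] at this
  · exact isbel_dual_of W

lemma strictPrec_dual {α : Type*} [Fintype α] [DecidableEq α] (W : Set (Finset α))
    (q p : α) : strictPrec (dualW W) q p ↔ strictPrec W q p := by
  unfold strictPrec; rw [isbel_dual, isbel_dual]

lemma strictPrec_ne {α : Type*} [DecidableEq α] {W : Set (Finset α)} {q p : α}
    (h : strictPrec W q p) : p ≠ q := by
  rintro rfl
  exact h.2 fun X _ _ hw => hw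

lemma shift_compl {α : Type*} [Fintype α] [DecidableEq α] {X : Finset α} {p q : α}
    (hp : p ∈ X) (hq : q ∉ X) (hpq : p ≠ q) :
    (insert q (X.erase p))ᶜ = insert p (Xᶜ.erase q) := by
  ext x
  rcases eq_or_ne x p with rfl | hxp <;> rcases eq_or_ne x q with rfl | hxq <;>
    simp_all [Finset.mem_erase]

lemma key {α : Type*} [Fintype α] [DecidableEq α] (W : Set (Finset α))
    (X : Finset α) : shiftMinWinning (dualW W) X ↔ shiftMaxLosing W Xᶜ := by
  constructor
  · rintro ⟨h1, h2, h3⟩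
    refine ⟨h1, ?_, ?_⟩
    · intro Z hZ
      have hsub : Zᶜ ⊂ X := by rwa [← compl_compl X, Finset.compl_ssubset_compl]
      have := h2 Zᶜ hsub
      simpa [dualW] using this
    · rintro ⟨Z, p, q, hZW, hpZ, hqZ, hprec, hXc⟩
      have hpq : p ≠ q := strictPrec_ne hprec
      have hqXc : q ∈ Xᶜ := by rw [hXc]; exact Finset.mem_insert_self _ _
      have hpXc : p ∉ Xᶜ := by
        rw [hXc]
        simp [Finset.mem_insert, hpq, Finset.mem_erase]
      have hpX : p ∈ X := by simpa using hpXc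
      have hqX : q ∉ X := by simpa using hqXc
      have hZeq : Z = insert p (Xᶜ.erase q) := by
        have : Xᶜ.erase q = Z.erase p := by
          rw [hXc, Finset.erase_insert (by simp [Finset.mem_erase, hqZ])]
        rw [this, Finset.insert_erase hpZ]
      have := h3 p q hpX hqX ((strictPrec_dual W q p).mpr hprec)
      simp only [dualW, Set.mem_setOf_eq, not_not] at this
      rw [shift_compl hpX hqX hpq, ← hZeq] at this
      exact hZW this
  · rintro ⟨h1, h2, h3⟩
    refine ⟨h1, ?_, ?_⟩
    · intro Y hY
      have hsub : Xᶜ ⊂ Yᶜ := by rwa [Finset.compl_ssubset_compl]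
      have := h2 Yᶜ hsub
      simp [dualW, this]
    · intro p q hpX hqX hprec hins
      have hprec' := (strictPrec_dual W q p).mp hprec
      have hpq : p ≠ q := strictPrec_ne hprec'
      simp only [dualW, Set.mem_setOf_eq] at hins
      rw [shift_compl hpX hqX hpq] at hins
      refine h3 ⟨insert p (Xᶜ.erase q), p, q, hins, Finset.mem_insert_self _ _, ?_, hprec', ?_⟩
      · simp only [Finset.mem_insert, Finset.mem_erase]
        rintro (rfl | ⟨h, _⟩)
        · exact hpq rfl
        · exact h rfl
      · rw [Finset.erase_insert (by simp [Finset.mem_erase]; exact fun _ => hpX), Finset.insert_erase (by simpa using hqX)]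

/-- duality exchanges unique shift-maximal losing coalitions and
unique shift-minimal winning coalitions: if `G = (P, W)` is a complete simple
game with a unique shift-maximal losing coalition `S`, then `P ∖ S` is the
unique shift-minimal winning coalition of the dual game `G*`. -/
theorem stmt_18 {α : Type*} [Fintype α] [DecidableEq α] (W : Set (Finset α))
    (hne : W.Nonempty)
    (hmono : ∀ X Y : Finset α, X ∈ W → X ⊆ Y → Y ∈ W)
    (hcomp : ∀ i j : α, isbelGE W i j ∨ isbelGE W j i)
    (S : Finset α)
    (hS : shiftMaxLosing W S)
    (huniq : ∀ Y : Finset α, shiftMaxLosing W Y → Y = S) :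
    shiftMinWinning (dualW W) Sᶜ ∧
      ∀ X : Finset α, shiftMinWinning (dualW W) X → X = Sᶜ := by
  constructor
  · rw [key, compl_compl]; exact hS
  · intro X hX
    rw [key] at hX
    have := huniq Xᶜ hX
    rw [← this, compl_compl]
end
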